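/- Let β be a harmonic noncommutative polynomial in two variables, homogeneous of degree d ≥ 2. Then β can be uniquely written as β = x_1·f + x_2·g where f, g are harmonic homogeneous polynomials of degree d−1 satisfying D[f, x_1, h] = −D[g, x_2, h]. -/

import Mathlib

noncomputable section

/-- Variables: `some i` is `xᵢ`, `none` is the direction variable `h`. -/
abbrev Var (g : ℕ) := Option (Fin g)

/-- Noncommutative polynomials `ℝ⟨x₁,…,x_g,h⟩`. -/
abbrev NC (g : ℕ) := MonoidAlgebra ℝ (FreeMonoid (Var g))

/-- The monomial corresponding to a word. -/
def mono (g : ℕ) (w : List (Var g)) : NC g :=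
  MonoidAlgebra.of ℝ (FreeMonoid (Var g)) (FreeMonoid.ofList w)

/-- The generator `xᵢ`. -/
def Xv (g : ℕ) (i : Fin g) : NC g := mono g [some i]

/-- The direction variable `h`. -/
def Hv (g : ℕ) : NC g := mono g [none]

/-- Directional derivative of a word in `xᵢ` in direction `h`: sum of the
terms obtained by replacing one occurrence of `xᵢ` by `h`. -/
def wordD (g : ℕ) (i : Fin g) : List (Var g) → NC g
  | [] => 0
  | a :: w =>
      (if a = some i then mono g (none :: w) else 0) + mono g [a] * wordD g i w

/-- Directional derivative `D[p, xᵢ, h]`, extended linearly from words. -/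
def D (g : ℕ) (i : Fin g) (p : NC g) : NC g :=
  Finsupp.sum p.coeff fun w c => c • wordD g i (FreeMonoid.toList w)

/-- The noncommutative Laplacian `Lap[p,h] := ∑ᵢ D[D[p,xᵢ,h],xᵢ,h]`. -/
def Lap (g : ℕ) (p : NC g) : NC g := ∑ i : Fin g, D g i (D g i p)

/-- The transpose: linear anti-automorphism reversing words and fixing generators. -/
def transp (g : ℕ) (p : NC g) : NC g :=
  MonoidAlgebra.ofCoeff (Finsupp.mapDomain (fun w => FreeMonoid.ofList (FreeMonoid.toList w).reverse) p.coeff)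

/-- Evaluation of a polynomial at a tuple of matrices (one for each variable). -/
def eval (g n : ℕ) (M : Var g → Matrix (Fin n) (Fin n) ℝ) (p : NC g) :
    Matrix (Fin n) (Fin n) ℝ :=
  Finsupp.sum p.coeff fun w c => c • ((FreeMonoid.toList w).map M).prod

/-- `p` is a polynomial in `x₁,…,x_g` only (the variable `h` does not occur). -/
def NoH (g : ℕ) (p : NC g) : Prop :=
  ∀ w ∈ p.coeff.support, none ∉ FreeMonoid.toList w

/-- `p` is a homogeneous polynomial of degree `d` in the variables `x₁,…,x_g`. -/
def HomogX (g : ℕ) (d : ℕ) (p : NC g) : Prop :=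
  ∀ w ∈ p.coeff.support, none ∉ FreeMonoid.toList w ∧ (FreeMonoid.toList w).length = d


-- ===== helpers =====

@[simp] lemma ofList_inj {α : Type*} {l₁ l₂ : List α} :
    FreeMonoid.ofList l₁ = FreeMonoid.ofList l₂ ↔ l₁ = l₂ :=
  ⟨fun h => congrArg FreeMonoid.toList h, congrArg _⟩

lemma ofList_eq_iff {α : Type*} {l : List α} {u : FreeMonoid α} :
    FreeMonoid.ofList l = u ↔ l = FreeMonoid.toList u := by
  rw [← FreeMonoid.ofList_toList u, ofList_inj, FreeMonoid.toList_ofList]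

lemma mono_eq_single (g : ℕ) (w : List (Var g)) :
    mono g w = MonoidAlgebra.single (FreeMonoid.ofList w) (1:ℝ) := rfl

lemma mono_mul_single (g : ℕ) (b : Var g) (w : FreeMonoid (Var g)) (c : ℝ) :
    mono g [b] * MonoidAlgebra.single w c
      = MonoidAlgebra.single (FreeMonoid.ofList (b :: FreeMonoid.toList w)) c := by
  rw [mono_eq_single, MonoidAlgebra.single_mul_single, one_mul]
  congr 1

lemma smul_single (g : ℕ) (c : ℝ) (w : FreeMonoid (Var g)) :
    c • (mono g (FreeMonoid.toList w)) = MonoidAlgebra.single w c := by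
  rw [mono_eq_single, MonoidAlgebra.smul_single', mul_one, FreeMonoid.ofList_toList]

-- ===== left quotient Q =====

def qword (g : ℕ) (a : Var g) : List (Var g) → ℝ → NC g
  | [], _ => 0
  | b :: t, c => if b = a then MonoidAlgebra.single (FreeMonoid.ofList t) c else 0

def Q (g : ℕ) (a : Var g) (p : NC g) : NC g :=
  Finsupp.sum p.coeff fun w c => qword g a (FreeMonoid.toList w) c

lemma qword_zero (g : ℕ) (a : Var g) (l) : qword g a l 0 = 0 := by
  cases l <;> simp [qword]

lemma qword_add (g : ℕ) (a : Var g) (l) (c₁ c₂ : ℝ) :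
    qword g a l (c₁ + c₂) = qword g a l c₁ + qword g a l c₂ := by
  cases l with
  | nil => simp [qword]
  | cons b t => simp only [qword]; split_ifs <;> simp [MonoidAlgebra.single_add]

lemma Q_add (g : ℕ) (a : Var g) (p q : NC g) : Q g a (p + q) = Q g a p + Q g a q :=
  Finsupp.sum_add_index' (fun _ => qword_zero g a _) (fun _ c₁ c₂ => qword_add g a _ c₁ c₂)

lemma Q_zero (g : ℕ) (a : Var g) : Q g a 0 = 0 := Finsupp.sum_zero_index

lemma Q_single (g : ℕ) (a : Var g) (w : FreeMonoid (Var g)) (c : ℝ) :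
    Q g a (MonoidAlgebra.single w c) = qword g a (FreeMonoid.toList w) c :=
  Finsupp.sum_single_index (qword_zero g a _)

lemma Q_mul_mono (g : ℕ) (a b : Var g) (p : NC g) :
    Q g a (mono g [b] * p) = if b = a then p else 0 := by
  induction p using MonoidAlgebra.induction_linear with
  | zero => rw [mul_zero, Q_zero]; split_ifs <;> rfl
  | add p q hp hq => rw [mul_add, Q_add, hp, hq]; split_ifs <;> simp
  | single w c =>
      rw [mono_mul_single, Q_single, FreeMonoid.toList_ofList]
      simp only [qword, FreeMonoid.ofList_toList]

lemma Q_apply (g : ℕ) (a : Var g) (p : NC g) (u : FreeMonoid (Var g)) :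
    (Q g a p).coeff u = p.coeff (FreeMonoid.ofList (a :: FreeMonoid.toList u)) := by
  classical
  induction p using MonoidAlgebra.induction_linear with
  | zero => rw [Q_zero]; rfl
  | add p q hp hq => rw [Q_add, MonoidAlgebra.coeff_add, Finsupp.add_apply, hp, hq]; rfl
  | single w c =>
      rw [Q_single]
      rcases hl : FreeMonoid.toList w with _ | ⟨b, t⟩
      · have hw : w = FreeMonoid.ofList [] := by rw [← FreeMonoid.ofList_toList w, hl]
        subst hw
        show (0 : NC g).coeff u = _
        rw [MonoidAlgebra.coeff_zero, Finsupp.zero_apply, eq_comm, MonoidAlgebra.single_apply, if_neg]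
        intro h
        have := congrArg FreeMonoid.toList h
        simp only [FreeMonoid.toList_ofList] at this
        exact List.cons_ne_nil _ _ this.symm
      · have hw : w = FreeMonoid.ofList (b :: t) := by rw [← FreeMonoid.ofList_toList w, hl]
        subst hw
        by_cases hba : b = a
        · subst hba
          simp only [qword, if_pos rfl, if_true, MonoidAlgebra.single_apply, ofList_eq_iff,
            FreeMonoid.toList_ofList, List.cons.injEq, true_and]
        · simp only [qword, if_neg hba, MonoidAlgebra.single_apply, ofList_eq_iff,
            FreeMonoid.toList_ofList, List.cons.injEq]
          rw [MonoidAlgebra.coeff_zero, Finsupp.zero_apply, eq_comm, if_neg]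
          rintro ⟨h1, -⟩; exact hba h1

-- ===== decomposition by first letter =====

lemma decomp (p : NC 2) :
    p = MonoidAlgebra.single 1 (p.coeff 1) + Hv 2 * Q 2 none p
        + Xv 2 0 * Q 2 (some 0) p + Xv 2 1 * Q 2 (some 1) p := by
  classical
  induction p using MonoidAlgebra.induction_linear with
  | zero => simp [Q_zero]
  | add p q hp hq =>
      rw [MonoidAlgebra.coeff_add, Finsupp.add_apply, MonoidAlgebra.single_add, Q_add, Q_add, Q_add,
        mul_add, mul_add, mul_add]
      conv_lhs => rw [hp, hq]
      abel
  | single w c =>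
      rcases hl : FreeMonoid.toList w with _ | ⟨b, t⟩
      · have hw : w = 1 := by
          rw [← FreeMonoid.ofList_toList w, hl]; rfl
        subst hw
        rw [Q_single, Q_single, Q_single, FreeMonoid.toList_one]
        simp [qword, MonoidAlgebra.single_apply]
      · have hw : w = FreeMonoid.ofList (b :: t) := by rw [← FreeMonoid.ofList_toList w, hl]
        subst hw
        have h1 : (MonoidAlgebra.single (FreeMonoid.ofList (b :: t)) c : NC 2).coeff 1 = 0 := by
          rw [MonoidAlgebra.single_apply, if_neg]
          intro h
          have := congrArg FreeMonoid.toList h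
          rw [FreeMonoid.toList_ofList, FreeMonoid.toList_one] at this
          exact List.cons_ne_nil _ _ this
        rw [Q_single, Q_single, Q_single, FreeMonoid.toList_ofList, h1]
        rcases b with _ | i
        · simp [qword, Hv, mono_mul_single]
        · fin_cases i <;>
            simp [qword, Xv, mono_mul_single, MonoidAlgebra.single_zero]

-- ===== D lemmas =====

lemma D_zero (g : ℕ) (i : Fin g) : D g i 0 = 0 := Finsupp.sum_zero_index

lemma D_add (g : ℕ) (i : Fin g) (p q : NC g) : D g i (p + q) = D g i p + D g i q :=
  Finsupp.sum_add_index' (fun _ => zero_smul ℝ _) (fun _ c₁ c₂ => add_smul c₁ c₂ _)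

lemma D_single (g : ℕ) (i : Fin g) (w : FreeMonoid (Var g)) (c : ℝ) :
    D g i (MonoidAlgebra.single w c) = c • wordD g i (FreeMonoid.toList w) :=
  Finsupp.sum_single_index (zero_smul ℝ _)

lemma mono_cons (g : ℕ) (x : Var g) (l : List (Var g)) :
    mono g (x :: l) = mono g [x] * mono g l := by
  rw [mono_eq_single g l, mono_mul_single, FreeMonoid.toList_ofList]
  rfl

lemma D_mul_mono (g : ℕ) (i : Fin g) (b : Var g) (p : NC g) :
    D g i (mono g [b] * p)
      = (if b = some i then Hv g * p else 0) + mono g [b] * D g i p := by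
  induction p using MonoidAlgebra.induction_linear with
  | zero => rw [mul_zero, D_zero, mul_zero]; split_ifs <;> simp
  | add p q hp hq =>
      rw [mul_add, D_add, hp, hq, D_add, mul_add]
      split_ifs <;> simp [mul_add] <;> abel
  | single w c =>
      rw [mono_mul_single, D_single, D_single, FreeMonoid.toList_ofList]
      show c • wordD g i (b :: FreeMonoid.toList w) = _
      rw [wordD, smul_add, mul_smul_comm]
      congr 1
      split_ifs with h
      · rw [mono_cons, ← smul_single g c w, mul_smul_comm]
        rfl
      · rw [smul_zero]

lemma DD_mul (i : Fin 2) (b : Var 2) (p : NC 2) :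
    D 2 i (D 2 i (mono 2 [b] * p))
      = (if b = some i then Hv 2 * D 2 i p + Hv 2 * D 2 i p else 0)
        + mono 2 [b] * D 2 i (D 2 i p) := by
  rw [D_mul_mono]
  split_ifs with h
  · rw [D_add, show Hv 2 = mono 2 [none] from rfl, D_mul_mono, if_neg (by simp),
      D_mul_mono, if_pos h, show Hv 2 = mono 2 [none] from rfl]
    abel
  · rw [zero_add, D_mul_mono, if_neg h, zero_add]

lemma Lap_mul (b : Var 2) (p : NC 2) :
    Lap 2 (mono 2 [b] * p)
      = (match b with
         | none => 0
         | some j => Hv 2 * D 2 j p + Hv 2 * D 2 j p)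
        + mono 2 [b] * Lap 2 p := by
  rw [Lap, Fin.sum_univ_two, DD_mul, DD_mul, Lap, Fin.sum_univ_two, mul_add]
  rcases b with _ | j
  · simp
  · fin_cases j <;> simp <;> abel

lemma Lap_add (p q : NC 2) : Lap 2 (p + q) = Lap 2 p + Lap 2 q := by
  rw [Lap, Lap, Lap, Fin.sum_univ_two, Fin.sum_univ_two, Fin.sum_univ_two,
    D_add, D_add, D_add, D_add]
  abel

lemma HomogX_Q (d : ℕ) (p : NC 2) (hp : HomogX 2 d p) (a : Var 2) :
    HomogX 2 (d - 1) (Q 2 a p) := by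
  intro u hu
  rw [Finsupp.mem_support_iff, Q_apply] at hu
  obtain ⟨hna, hlen⟩ := hp _ (Finsupp.mem_support_iff.mpr hu)
  rw [FreeMonoid.toList_ofList] at hna hlen
  refine ⟨fun hmem => hna (List.mem_cons_of_mem _ hmem), ?_⟩
  simp only [List.length_cons] at hlen
  omega


/-- unique decomposition `β = x₁·f + x₂·g` of a harmonic homogeneous
polynomial of degree `d ≥ 2` into harmonic homogeneous pieces of degree `d-1`
satisfying `D[f,x₁,h] = -D[g,x₂,h]`. -/
theorem harmonic_neighbor_decomposition (d : ℕ) (hd : 2 ≤ d) (β : NC 2)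
    (hβhom : HomogX 2 d β) (hβharm : Lap 2 β = 0) :
    ∃! fg : NC 2 × NC 2,
      β = Xv 2 0 * fg.1 + Xv 2 1 * fg.2 ∧
      HomogX 2 (d - 1) fg.1 ∧ HomogX 2 (d - 1) fg.2 ∧
      Lap 2 fg.1 = 0 ∧ Lap 2 fg.2 = 0 ∧
      D 2 0 fg.1 = - D 2 1 fg.2 := by
  classical
  set f := Q 2 (some 0) β with hf
  set gq := Q 2 (some 1) β with hgq
  have hβ1 : β.coeff 1 = 0 := by
    by_contra h
    have := (hβhom 1 (Finsupp.mem_support_iff.mpr h)).2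
    rw [FreeMonoid.toList_one] at this
    simp at this
    omega
  have hQn : Q 2 none β = 0 := by
    ext u
    rw [Q_apply, MonoidAlgebra.coeff_zero, Finsupp.zero_apply]
    by_contra h
    have := (hβhom _ (Finsupp.mem_support_iff.mpr h)).1
    rw [FreeMonoid.toList_ofList] at this
    exact this List.mem_cons_self
  have hdec : β = Xv 2 0 * f + Xv 2 1 * gq := by
    conv_lhs => rw [decomp β]
    rw [hβ1, MonoidAlgebra.single_zero, hQn, mul_zero, zero_add, zero_add]
  have key : Hv 2 * (D 2 0 f) + Hv 2 * (D 2 0 f) + (Hv 2 * (D 2 1 gq) + Hv 2 * (D 2 1 gq))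
      + (mono 2 [some 0] * Lap 2 f + mono 2 [some 1] * Lap 2 gq) = 0 := by
    rw [← hβharm]
    conv_rhs => rw [hdec]
    rw [show Xv 2 0 = mono 2 [some 0] from rfl, show Xv 2 1 = mono 2 [some 1] from rfl,
      Lap_add, Lap_mul, Lap_mul]
    dsimp only
    abel
  have hLf : Lap 2 f = 0 := by
    have h0 := congrArg (Q 2 (some 0)) key
    rw [Q_add, Q_add, Q_add, Q_add, Q_add, show Hv 2 = mono 2 [none] from rfl,
      Q_mul_mono, Q_mul_mono, Q_mul_mono, Q_mul_mono, Q_zero] at h0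
    simpa using h0
  have hLg : Lap 2 gq = 0 := by
    have h0 := congrArg (Q 2 (some 1)) key
    rw [Q_add, Q_add, Q_add, Q_add, Q_add, show Hv 2 = mono 2 [none] from rfl,
      Q_mul_mono, Q_mul_mono, Q_mul_mono, Q_mul_mono, Q_zero] at h0
    simpa using h0
  have hS : D 2 0 f + D 2 0 f + (D 2 1 gq + D 2 1 gq) = 0 := by
    have h0 := congrArg (Q 2 none) key
    rw [Q_add, Q_add, Q_add, Q_add, Q_add, show Hv 2 = mono 2 [none] from rfl,
      Q_mul_mono, Q_mul_mono, Q_mul_mono, Q_mul_mono, Q_zero] at h0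
    simpa using h0
  have hsum : D 2 0 f + D 2 1 gq = 0 := by
    have h2 : (2:ℝ) • (D 2 0 f + D 2 1 gq) = 0 := by
      rw [two_smul, ← hS]; abel
    exact (smul_eq_zero.mp h2).resolve_left (by norm_num)
  have hD : D 2 0 f = - D 2 1 gq := eq_neg_of_add_eq_zero_left hsum
  refine ⟨(f, gq), ⟨hdec, HomogX_Q d β hβhom _, HomogX_Q d β hβhom _, hLf, hLg, hD⟩, ?_⟩
  rintro ⟨f', g'⟩ ⟨hdec', -, -, -, -, -⟩
  have e0 : Q 2 (some 0) β = f' := by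
    rw [hdec', Q_add, show Xv 2 0 = mono 2 [some 0] from rfl,
      show Xv 2 1 = mono 2 [some 1] from rfl, Q_mul_mono, Q_mul_mono]
    simp
  have e1 : Q 2 (some 1) β = g' := by
    rw [hdec', Q_add, show Xv 2 0 = mono 2 [some 0] from rfl,
      show Xv 2 1 = mono 2 [some 1] from rfl, Q_mul_mono, Q_mul_mono]
    simp
  rw [Prod.ext_iff]
  exact ⟨(hf.trans e0).symm ▸ rfl, (hgq.trans e1).symm ▸ rfl⟩
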